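/- Let 𝔅 be an algebra of subsets of ω containing all finite sets, and let M, M′ ⊆ M₁(P(ω)). Suppose there are n ∈ ω, ε > 0, k ∈ ω with k > 12n/ε, almost disjoint sets Z₁, …, Z_k ⊆ ω, and sets A₁, B₁, …, A_n, B_n ∈ 𝔅 such that for every j with 1 ≤ j ≤ k and every (μ, μ′) ∈ M × M′ there is i ≤ n with |μ(Y_{j,i}) − μ′(Y_{j,i})| ≥ ε, where Y_{j,i} = (A_i ∩ Z_j) ∪ (B_i ∩ Z_j^c). Then the pair (M, M′) is 𝔅-separated. -/

import Mathlib

/-- `𝔄` is an algebra of subsets of `S`: it contains `S`, and is closed under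
complements, finite unions and finite intersections. -/
def IsSetAlgebraOn {S : Type*} (𝔄 : Set (Set S)) : Prop :=
  Set.univ ∈ 𝔄 ∧ (∀ A ∈ 𝔄, Aᶜ ∈ 𝔄) ∧ (∀ A ∈ 𝔄, ∀ B ∈ 𝔄, A ∪ B ∈ 𝔄) ∧
    (∀ A ∈ 𝔄, ∀ B ∈ 𝔄, A ∩ B ∈ 𝔄)

/-- `m` is finitely additive on the algebra `𝔄` of subsets of `S`. -/
def FinAddOn {S : Type*} (𝔄 : Set (Set S)) (m : Set S → ℝ) : Prop :=
  ∀ A ∈ 𝔄, ∀ B ∈ 𝔄, Disjoint A B → m (A ∪ B) = m A + m B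

/-- `m` has variation norm `‖m‖ = |m|(S) ≤ 1` on the algebra `𝔄`. -/
def VarLeOne {S : Type*} (𝔄 : Set (Set S)) (m : Set S → ℝ) : Prop :=
  ∀ B ∈ 𝔄, |m B| + |m Bᶜ| ≤ 1

/-- `M₁(P(S))`: the finitely additive measures of norm at most `1` on the full power
set algebra of `S`. -/
def M1full (S : Type*) : Set (Set S → ℝ) :=
  {m | FinAddOn (Set.univ : Set (Set S)) m ∧ VarLeOne (Set.univ : Set (Set S)) m}

/-- The pair `(M, M')` is `𝔅`-separated: there are `ε > 0` and finitely many sets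
`B₁, …, B_n ∈ 𝔅` such that for every `(μ, μ') ∈ M × M'` there is `i ≤ n` with
`|μ(B_i) − μ'(B_i)| ≥ ε`. -/
def SeparatedBy {S : Type*} (𝔅 : Set (Set S)) (M M' : Set (Set S → ℝ)) : Prop :=
  ∃ ε > (0 : ℝ), ∃ n : ℕ, 0 < n ∧ ∃ B : Fin n → Set S, (∀ i, B i ∈ 𝔅) ∧
    ∀ m ∈ M, ∀ m' ∈ M', ∃ i, ε ≤ |m (B i) - m' (B i)|

/-- Haydon-type separation lemma: suppose `𝔅` contains all finite sets, and there are
`n ∈ ω`, `ε > 0`, `k > 12n/ε`, almost disjoint sets `Z₁, …, Z_k ⊆ ω` and sets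
`A₁, B₁, …, A_n, B_n ∈ 𝔅` such that for each `j ≤ k` the pair `(M, M')` is separated
(with constant `ε`) by the sets `Y_{j,i} = (A_i ∩ Z_j) ∪ (B_i ∩ Z_jᶜ)`, `i ≤ n`.
Then `(M, M')` is `𝔅`-separated. -/
lemma myempty {μ : Set ℕ → ℝ} (h : ∀ X Y : Set ℕ, Disjoint X Y → μ (X ∪ Y) = μ X + μ Y) :
    μ ∅ = 0 := by
  have := h ∅ ∅ disjoint_bot_left
  simp only [Set.union_empty] at this
  linarith

lemma mysum {ι : Type*} [DecidableEq ι] {μ : Set ℕ → ℝ}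
    (h : ∀ X Y : Set ℕ, Disjoint X Y → μ (X ∪ Y) = μ X + μ Y)
    (S : ι → Set ℕ) (hdisj : Pairwise (Function.onFun Disjoint S)) (s : Finset ι) :
    μ (⋃ i ∈ s, S i) = ∑ i ∈ s, μ (S i) := by
  induction s using Finset.induction with
  | empty => simpa using myempty h
  | insert _ _ ha ih =>
    rename_i a s
    rw [Finset.set_biUnion_insert, Finset.sum_insert ha, ← ih, h]
    rw [Set.disjoint_iUnion_right]
    intro i
    rw [Set.disjoint_iUnion_right]
    intro hi
    exact hdisj (fun e => ha (e ▸ hi))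

lemma myvar {ι : Type*} [Fintype ι] {μ : Set ℕ → ℝ}
    (h : ∀ X Y : Set ℕ, Disjoint X Y → μ (X ∪ Y) = μ X + μ Y)
    (hvar : ∀ B : Set ℕ, |μ B| + |μ Bᶜ| ≤ 1)
    (S : ι → Set ℕ) (hdisj : Pairwise (Function.onFun Disjoint S)) :
    ∑ i, |μ (S i)| ≤ 1 := by
  classical
  set pos : Finset ι := Finset.univ.filter (fun i => 0 ≤ μ (S i)) with hpos
  set neg : Finset ι := Finset.univ.filter (fun i => ¬ 0 ≤ μ (S i)) with hneg
  set P : Set ℕ := ⋃ i ∈ pos, S i with hP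
  set N : Set ℕ := ⋃ i ∈ neg, S i with hN
  have hμP : μ P = ∑ i ∈ pos, μ (S i) := mysum h S hdisj pos
  have hμN : μ N = ∑ i ∈ neg, μ (S i) := mysum h S hdisj neg
  have hP0 : 0 ≤ μ P := by
    rw [hμP]; exact Finset.sum_nonneg (fun i hi => (Finset.mem_filter.mp hi).2)
  have hN0 : μ N ≤ 0 := by
    rw [hμN]
    exact Finset.sum_nonpos (fun i hi => le_of_not_ge (Finset.mem_filter.mp hi).2)
  have htot : ∑ i, |μ (S i)| = μ P - μ N := by
    rw [hμP, hμN, ← Finset.sum_filter_add_sum_filter_not Finset.univ (fun i => 0 ≤ μ (S i))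
      (fun i => |μ (S i)|)]
    rw [Finset.sum_congr rfl (g := fun i => μ (S i))
      (fun i hi => abs_of_nonneg (Finset.mem_filter.mp hi).2),
      Finset.sum_congr rfl (g := fun i => -μ (S i))
      (fun i hi => abs_of_neg (lt_of_not_ge (Finset.mem_filter.mp hi).2)), Finset.sum_neg_distrib]
    ring
  have hPN : Disjoint P N := by
    rw [hP, hN, Set.disjoint_iUnion_left]
    intro i
    rw [Set.disjoint_iUnion_left]; intro hi
    rw [Set.disjoint_iUnion_right]
    intro l
    rw [Set.disjoint_iUnion_right]; intro hl
    refine hdisj (fun e => ?_)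
    rw [hpos] at hi; rw [hneg] at hl
    exact (Finset.mem_filter.mp hl).2 (e ▸ (Finset.mem_filter.mp hi).2)
  set R : Set ℕ := (P ∪ N)ᶜ with hR
  have hNPc : N ⊆ Pᶜ := hPN.symm.subset_compl_right
  rcases le_or_gt 0 (μ R) with hr | hr
  · have e1 : (P ∪ R)ᶜ = N := by
      rw [hR, Set.compl_union P (P ∪ N)ᶜ, compl_compl]
      rw [Set.inter_union_distrib_left, Set.compl_inter_self, Set.empty_union]
      exact Set.inter_eq_right.mpr hNPc
    have hPR : Disjoint P R := by
      rw [hR]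
      exact Set.disjoint_compl_right_iff_subset.mpr Set.subset_union_left
    have e2 : μ (P ∪ R) = μ P + μ R := h _ _ hPR
    have := hvar (P ∪ R)
    rw [e1] at this
    have h1 : μ P + μ R ≤ |μ (P ∪ R)| := e2 ▸ le_abs_self _
    have h2 : -μ N ≤ |μ N| := neg_le_abs _
    linarith [htot]
  · have e1 : Pᶜ = N ∪ R := by
      rw [hR]
      apply Set.eq_of_subset_of_subset
      · intro x hx
        by_cases hxn : x ∈ N
        · exact Or.inl hxn
        · exact Or.inr (fun hc => hc.elim hx hxn)
      · exact Set.union_subset hNPc (fun x hx => fun hc => hx (Or.inl hc))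
    have hNR : Disjoint N R := by
      rw [hR]
      exact Set.disjoint_compl_right_iff_subset.mpr Set.subset_union_right
    have e2 : μ Pᶜ = μ N + μ R := by rw [e1]; exact h _ _ hNR
    have := hvar P
    have h1 : μ P ≤ |μ P| := le_abs_self _
    have h2 : -(μ N + μ R) ≤ |μ Pᶜ| := by rw [← e2]; exact neg_le_abs _
    linarith [htot]

lemma mydecomp {μ : Set ℕ → ℝ} (h : ∀ X Y : Set ℕ, Disjoint X Y → μ (X ∪ Y) = μ X + μ Y)
    (A B Z Z' F : Set ℕ) (hZ : Z = Z' ∪ F) (hd : Disjoint Z' F) :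
    μ ((A ∩ Z) ∪ (B ∩ Zᶜ)) =
      μ B + μ ((A \ B) ∩ Z') + μ ((A \ B) ∩ F) - μ ((B \ A) ∩ Z') - μ ((B \ A) ∩ F) := by
  have h1 : μ ((A ∩ Z) ∪ (B ∩ Zᶜ)) = μ (A ∩ Z) + μ (B ∩ Zᶜ) :=
    h _ _ (disjoint_compl_right.mono Set.inter_subset_right Set.inter_subset_right)
  have h2 : μ B = μ (B ∩ Z) + μ (B ∩ Zᶜ) := by
    rw [← h _ _ (disjoint_compl_right.mono Set.inter_subset_right Set.inter_subset_right),
      Set.inter_union_compl]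
  have dAB : Disjoint (A ∩ B) (A \ B) :=
    Set.disjoint_left.mpr (fun x hx h2 => h2.2 hx.2)
  have dBA : Disjoint (A ∩ B) (B \ A) :=
    Set.disjoint_left.mpr (fun x hx h2 => h2.2 hx.1)
  have h3 : μ (A ∩ Z) = μ ((A ∩ B) ∩ Z) + μ ((A \ B) ∩ Z) := by
    rw [← h _ _ (dAB.mono Set.inter_subset_left Set.inter_subset_left),
      ← Set.union_inter_distrib_right, Set.inter_union_diff]
  have h4 : μ (B ∩ Z) = μ ((A ∩ B) ∩ Z) + μ ((B \ A) ∩ Z) := by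
    rw [← h _ _ (dBA.mono Set.inter_subset_left Set.inter_subset_left),
      ← Set.union_inter_distrib_right, Set.inter_comm A B, Set.inter_union_diff]
  have h5 : μ ((A \ B) ∩ Z) = μ ((A \ B) ∩ Z') + μ ((A \ B) ∩ F) := by
    rw [← h _ _ (hd.mono Set.inter_subset_right Set.inter_subset_right),
      ← Set.inter_union_distrib_left, ← hZ]
  have h6 : μ ((B \ A) ∩ Z) = μ ((B \ A) ∩ Z') + μ ((B \ A) ∩ F) := by
    rw [← h _ _ (hd.mono Set.inter_subset_right Set.inter_subset_right),
      ← Set.inter_union_distrib_left, ← hZ]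
  linarith

theorem statement13 (𝔅 : Set (Set ℕ)) (h𝔅 : IsSetAlgebraOn 𝔅)
    (hfin : ∀ F : Set ℕ, F.Finite → F ∈ 𝔅)
    (M M' : Set (Set ℕ → ℝ)) (hM : M ⊆ M1full ℕ) (hM' : M' ⊆ M1full ℕ)
    (n : ℕ) (ε : ℝ) (hε : 0 < ε) (k : ℕ) (hk : 12 * (n : ℝ) / ε < (k : ℝ))
    (Z : Fin k → Set ℕ) (hZ : ∀ j l, j ≠ l → (Z j ∩ Z l).Finite)
    (A B : Fin n → Set ℕ) (hA : ∀ i, A i ∈ 𝔅) (hB : ∀ i, B i ∈ 𝔅)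
    (hsep : ∀ j : Fin k, ∀ m ∈ M, ∀ m' ∈ M', ∃ i : Fin n,
      ε ≤ |m ((A i ∩ Z j) ∪ (B i ∩ (Z j)ᶜ)) - m' ((A i ∩ Z j) ∪ (B i ∩ (Z j)ᶜ))|) :
    SeparatedBy 𝔅 M M' := by
  classical
  rcases Set.eq_empty_or_nonempty M with hMe | ⟨m₀, hm₀⟩
  · exact ⟨1, one_pos, 1, one_pos, fun _ => Set.univ, fun _ => h𝔅.1,
      fun m hm => by rw [hMe] at hm; exact absurd hm (Set.notMem_empty m)⟩
  rcases Set.eq_empty_or_nonempty M' with hMe' | ⟨m₀', hm₀'⟩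
  · exact ⟨1, one_pos, 1, one_pos, fun _ => Set.univ, fun _ => h𝔅.1,
      fun m _ m' hm' => by rw [hMe'] at hm'; exact absurd hm' (Set.notMem_empty m')⟩
  have hk0 : 0 < k := by
    have h0 : (0 : ℝ) ≤ 12 * (n : ℝ) / ε := by positivity
    have hkr : (0 : ℝ) < (k : ℝ) := lt_of_le_of_lt h0 hk
    exact_mod_cast hkr
  have hn0 : 0 < n := by
    rcases Nat.eq_zero_or_pos n with h0 | h0
    · exfalso
      obtain ⟨i, -⟩ := hsep ⟨0, hk0⟩ m₀ hm₀ m₀' hm₀'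
      exact absurd i.2 (by omega)
    · exact h0
  have habs_sub : ∀ x y : ℝ, |x - y| ≤ |x| + |y| := fun x y => by
    rw [sub_eq_add_neg]
    exact (abs_add_le x (-y)).trans_eq (by rw [abs_neg])
  -- split Z j into new part and finite part
  set U : Fin k → Set ℕ := fun j => ⋃ l : Fin k, ⋃ _ : l < j, Z l with hU
  set Z' : Fin k → Set ℕ := fun j => Z j \ U j with hZ'
  set F : Fin k → Set ℕ := fun j => Z j ∩ U j with hF
  have hsplit : ∀ j, Z j = Z' j ∪ F j := fun j => (Set.diff_union_inter _ _).symm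
  have hdisjZF : ∀ j, Disjoint (Z' j) (F j) :=
    fun j => Set.disjoint_left.mpr (fun x hx h2 => hx.2 h2.2)
  have hFfin : ∀ j, (F j).Finite := by
    intro j
    have hsub : F j ⊆ ⋃ l ∈ ({l : Fin k | l ≠ j} : Set (Fin k)), Z j ∩ Z l := by
      intro x hx
      obtain ⟨hxz, hxu⟩ := hx
      simp only [hU, Set.mem_iUnion] at hxu
      obtain ⟨l, hl, hxl⟩ := hxu
      exact Set.mem_biUnion (ne_of_lt hl) ⟨hxz, hxl⟩
    exact Set.Finite.subset
      (Set.Finite.biUnion (Set.toFinite _) (fun l hl => hZ j l (Ne.symm hl))) hsub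
  have hZ'disj : Pairwise (Function.onFun Disjoint Z') := by
    have key : ∀ j l : Fin k, l < j → Disjoint (Z' j) (Z l) := by
      intro j l hl
      refine Set.disjoint_left.mpr (fun x hx hxl => hx.2 ?_)
      simp only [hU, Set.mem_iUnion]
      exact ⟨l, hl, hxl⟩
    intro j l hjl
    rcases lt_or_gt_of_ne hjl with h | h
    · exact ((key l j h).mono_right Set.diff_subset).symm
    · exact (key j l h).mono_right Set.diff_subset
  -- the separating family
  set C : (Unit ⊕ Fin n ⊕ Fin n ⊕ (Fin k × Fin n) ⊕ (Fin k × Fin n)) → Set ℕ :=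
    Sum.elim (fun _ => Set.univ) (Sum.elim A (Sum.elim B
      (Sum.elim (fun p => (A p.2 \ B p.2) ∩ F p.1)
        (fun p => (B p.2 \ A p.2) ∩ F p.1)))) with hC
  have hCmem : ∀ i, C i ∈ 𝔅 := by
    rintro (⟨⟩ | i | i | ⟨j, i⟩ | ⟨j, i⟩)
    · exact h𝔅.1
    · exact hA i
    · exact hB i
    · exact hfin _ ((hFfin j).subset Set.inter_subset_right)
    · exact hfin _ ((hFfin j).subset Set.inter_subset_right)
  have key : ∀ m ∈ M, ∀ m' ∈ M', ∃ i, ε / 4 ≤ |m (C i) - m' (C i)| := by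
    intro m hm m' hm'
    by_contra hcon
    push_neg at hcon
    obtain ⟨hma, hmv⟩ := hM hm
    obtain ⟨hma', hmv'⟩ := hM' hm'
    have addm : ∀ X Y : Set ℕ, Disjoint X Y → m (X ∪ Y) = m X + m Y :=
      fun X Y hd => hma X (Set.mem_univ _) Y (Set.mem_univ _) hd
    have addm' : ∀ X Y : Set ℕ, Disjoint X Y → m' (X ∪ Y) = m' X + m' Y :=
      fun X Y hd => hma' X (Set.mem_univ _) Y (Set.mem_univ _) hd
    choose I hI using fun j => hsep j m hm m' hm'
    have hEG : ∀ j : Fin k, ε / 4 ≤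
        |m ((A (I j) \ B (I j)) ∩ Z' j) - m' ((A (I j) \ B (I j)) ∩ Z' j)| +
        |m ((B (I j) \ A (I j)) ∩ Z' j) - m' ((B (I j) \ A (I j)) ∩ Z' j)| := by
      intro j
      have d1 := mydecomp addm (A (I j)) (B (I j)) (Z j) (Z' j) (F j) (hsplit j) (hdisjZF j)
      have d2 := mydecomp addm' (A (I j)) (B (I j)) (Z j) (Z' j) (F j) (hsplit j) (hdisjZF j)
      have c1 := hcon (Sum.inr (Sum.inr (Sum.inl (I j))))
      have c2 := hcon (Sum.inr (Sum.inr (Sum.inr (Sum.inl (j, I j)))))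
      have c3 := hcon (Sum.inr (Sum.inr (Sum.inr (Sum.inr (j, I j)))))
      simp only [hC, Sum.elim_inl, Sum.elim_inr] at c1 c2 c3
      have hs := hI j
      rw [d1, d2] at hs
      set a := m (B (I j)) - m' (B (I j)) with ha
      set b := m ((A (I j) \ B (I j)) ∩ Z' j) - m' ((A (I j) \ B (I j)) ∩ Z' j) with hb
      set c := m ((A (I j) \ B (I j)) ∩ F j) - m' ((A (I j) \ B (I j)) ∩ F j) with hcc
      set d := m ((B (I j) \ A (I j)) ∩ Z' j) - m' ((B (I j) \ A (I j)) ∩ Z' j) with hd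
      set e := m ((B (I j) \ A (I j)) ∩ F j) - m' ((B (I j) \ A (I j)) ∩ F j) with he
      have hs' : ε ≤ |a + b + c - d - e| := by
        have heq : m (B (I j)) + m ((A (I j) \ B (I j)) ∩ Z' j) + m ((A (I j) \ B (I j)) ∩ F j)
            - m ((B (I j) \ A (I j)) ∩ Z' j) - m ((B (I j) \ A (I j)) ∩ F j)
            - (m' (B (I j)) + m' ((A (I j) \ B (I j)) ∩ Z' j) + m' ((A (I j) \ B (I j)) ∩ F j)
            - m' ((B (I j) \ A (I j)) ∩ Z' j) - m' ((B (I j) \ A (I j)) ∩ F j))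
            = a + b + c - d - e := by
          rw [ha, hb, hcc, hd, he]; ring
        rwa [heq] at hs
      have u1 : |a + b| ≤ |a| + |b| := abs_add_le a b
      have u2 : |a + b + c| ≤ |a + b| + |c| := abs_add_le _ c
      have u3 : |a + b + c - d| ≤ |a + b + c| + |d| := habs_sub _ d
      have u4 : |a + b + c - d - e| ≤ |a + b + c - d| + |e| := habs_sub _ e
      linarith
    set S : Fin k ⊕ Fin k → Set ℕ :=
      Sum.elim (fun j => (A (I j) \ B (I j)) ∩ Z' j)
        (fun j => (B (I j) \ A (I j)) ∩ Z' j) with hS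
    have hd0 : ∀ (j l : Fin k) (X Y : Set ℕ), j ≠ l → Disjoint (X ∩ Z' j) (Y ∩ Z' l) :=
      fun j l X Y hjl => (hZ'disj hjl).mono Set.inter_subset_right Set.inter_subset_right
    have hdiff : ∀ i : Fin n, Disjoint (A i \ B i) (B i \ A i) :=
      fun i => Set.disjoint_left.mpr (fun x hx hy => hy.2 hx.1)
    have hSdisj : Pairwise (Function.onFun Disjoint S) := by
      rintro (j | j) (l | l) hne <;>
        simp only [hS, Function.onFun, Sum.elim_inl, Sum.elim_inr]
      · exact hd0 j l _ _ (fun e => hne (by rw [e]))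
      · by_cases hjl : j = l
        · subst hjl
          exact (hdiff (I j)).mono Set.inter_subset_left Set.inter_subset_left
        · exact hd0 j l _ _ hjl
      · by_cases hjl : j = l
        · subst hjl
          exact ((hdiff (I j)).symm).mono Set.inter_subset_left Set.inter_subset_left
        · exact hd0 j l _ _ hjl
      · exact hd0 j l _ _ (fun e => hne (by rw [e]))
    have v1 := myvar addm (fun Bb => hmv Bb (Set.mem_univ _)) S hSdisj
    have v2 := myvar addm' (fun Bb => hmv' Bb (Set.mem_univ _)) S hSdisj
    rw [Fintype.sum_sum_type] at v1 v2
    simp only [hS, Sum.elim_inl, Sum.elim_inr] at v1 v2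
    have hsum1 : (k : ℝ) * (ε / 4) ≤ ∑ j : Fin k,
        (|m ((A (I j) \ B (I j)) ∩ Z' j) - m' ((A (I j) \ B (I j)) ∩ Z' j)| +
         |m ((B (I j) \ A (I j)) ∩ Z' j) - m' ((B (I j) \ A (I j)) ∩ Z' j)|) := by
      calc (k : ℝ) * (ε / 4) = ∑ _j : Fin k, (ε / 4) := by
            rw [Finset.sum_const, Finset.card_univ, Fintype.card_fin, nsmul_eq_mul]
        _ ≤ _ := Finset.sum_le_sum (fun j _ => hEG j)
    have hsum2 : ∑ j : Fin k,
        (|m ((A (I j) \ B (I j)) ∩ Z' j) - m' ((A (I j) \ B (I j)) ∩ Z' j)| +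
         |m ((B (I j) \ A (I j)) ∩ Z' j) - m' ((B (I j) \ A (I j)) ∩ Z' j)|) ≤ 2 := by
      have hle : ∀ j : Fin k,
          |m ((A (I j) \ B (I j)) ∩ Z' j) - m' ((A (I j) \ B (I j)) ∩ Z' j)| +
          |m ((B (I j) \ A (I j)) ∩ Z' j) - m' ((B (I j) \ A (I j)) ∩ Z' j)| ≤
          (|m ((A (I j) \ B (I j)) ∩ Z' j)| + |m ((B (I j) \ A (I j)) ∩ Z' j)|) +
          (|m' ((A (I j) \ B (I j)) ∩ Z' j)| + |m' ((B (I j) \ A (I j)) ∩ Z' j)|) := by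
        intro j
        have := habs_sub (m ((A (I j) \ B (I j)) ∩ Z' j)) (m' ((A (I j) \ B (I j)) ∩ Z' j))
        have := habs_sub (m ((B (I j) \ A (I j)) ∩ Z' j)) (m' ((B (I j) \ A (I j)) ∩ Z' j))
        linarith
      calc _ ≤ ∑ j : Fin k,
            ((|m ((A (I j) \ B (I j)) ∩ Z' j)| + |m ((B (I j) \ A (I j)) ∩ Z' j)|) +
             (|m' ((A (I j) \ B (I j)) ∩ Z' j)| + |m' ((B (I j) \ A (I j)) ∩ Z' j)|)) :=
          Finset.sum_le_sum (fun j _ => hle j)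
        _ ≤ 2 := by
          rw [Finset.sum_add_distrib, Finset.sum_add_distrib, Finset.sum_add_distrib]
          linarith
    have h12 : 12 * (n : ℝ) < (k : ℝ) * ε := by
      rw [div_lt_iff₀ hε] at hk
      exact hk
    have hn1 : (1 : ℝ) ≤ (n : ℝ) := by exact_mod_cast hn0
    linarith
  refine ⟨ε / 4, by positivity,
    Fintype.card (Unit ⊕ Fin n ⊕ Fin n ⊕ (Fin k × Fin n) ⊕ (Fin k × Fin n)),
    Fintype.card_pos, fun i => C ((Fintype.equivFin _).symm i), fun i => hCmem _, ?_⟩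
  intro m hm m' hm'
  obtain ⟨i, hi⟩ := key m hm m' hm'
  exact ⟨Fintype.equivFin _ i, by simpa using hi⟩
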